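/- Let (A(n)) be an i.i.d. sequence of random d×d max-plus matrices with no line of -∞, admitting a block decomposition A(n) = [[B(n), D(n)],[-∞, C(n)]] with respect to a partition (I,J), such that the incidence graph of B is strongly connected and P(D(1) = -∞ identically) < 1. Then for every i ∈ I, the event {for all n ∈ ℕ, (B(1)⋯B(n)D(n+1)·0)_i = -∞} has probability zero. -/

import Mathlib

open Filter MeasureTheory Topology
noncomputable section

/-- The max-plus semiring ℝ ∪ {-∞}, modelled as `WithBot ℝ`:
`⊥` is `-∞`, addition is the semiring multiplication, `Finset.sup` the semiring addition. -/
abbrev MP := WithBot ℝ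

/-- Embedding of ℝ ∪ {-∞} into the extended reals. -/
def toE (x : MP) : EReal := WithBot.recBotCoe ⊥ (fun r : ℝ => (r : EReal)) x

instance : MeasurableSpace MP := MeasurableSpace.comap toE inferInstance

instance {d : ℕ} : MeasurableSpace (Matrix (Fin d) (Fin d) MP) :=
  inferInstanceAs (MeasurableSpace (Fin d → Fin d → MP))

/-- Max-plus matrix multiplication: `(AB)_{ij} = max_k (A_{ik} + B_{kj})`. -/
def mpMul {d : ℕ} (A B : Matrix (Fin d) (Fin d) MP) : Matrix (Fin d) (Fin d) MP :=
  fun i j => Finset.univ.sup fun k => A i k + B k j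

/-- Max-plus identity matrix. -/
def mpId (d : ℕ) : Matrix (Fin d) (Fin d) MP :=
  fun i j => if i = j then (0 : MP) else ⊥

/-- Max-plus action of a matrix on an MP vector: `(Ax)_i = max_j (A_{ij} + x_j)`. -/
def mpAct {d : ℕ} (A : Matrix (Fin d) (Fin d) MP) (x : Fin d → MP) : Fin d → MP :=
  fun i => Finset.univ.sup fun j => A i j + x j

/-- `A^n = A(n-1) ⋯ A(0)` (max-plus product). -/
def mpProdFwd {d : ℕ} (A : ℕ → Matrix (Fin d) (Fin d) MP) : ℕ → Matrix (Fin d) (Fin d) MP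
  | 0 => mpId d
  | n + 1 => mpMul (A n) (mpProdFwd A n)

/-- `A(-1) A(-2) ⋯ A(-n)`, for a two-sided sequence (max-plus product). -/
def mpProdNeg {d : ℕ} (A : ℤ → Matrix (Fin d) (Fin d) MP) : ℕ → Matrix (Fin d) (Fin d) MP
  | 0 => mpId d
  | n + 1 => mpMul (mpProdNeg A n) (A (-(n + 1 : ℕ)))

/-- A matrix has no line (row) entirely equal to -∞. -/
def noBotLine {d : ℕ} (A : Matrix (Fin d) (Fin d) MP) : Prop := ∀ i, ∃ j, A i j ≠ ⊥

/-- The positive part `x⁺ = max(x,0)` of an element of ℝ ∪ {-∞}, as a real number. -/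
def mpPlus (x : MP) : ℝ := max (x.unbotD 0) 0

/-- `x_i(n,0) = max_j (A(n-1)⋯A(0))_{ij}`, i.e. `x(n,0) = A(n-1)⋯A(0)·0`. -/
def xvec {d : ℕ} (A : ℕ → Matrix (Fin d) (Fin d) MP) (n : ℕ) (i : Fin d) : MP :=
  Finset.univ.sup fun j => mpProdFwd A n i j

/-- `y_i(n,0) = max_j (A(-1)⋯A(-n))_{ij}`, i.e. `y(n,0) = A(-1)⋯A(-n)·0`. -/
def yvec {d : ℕ} (A : ℤ → Matrix (Fin d) (Fin d) MP) (n : ℕ) (i : Fin d) : MP :=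
  Finset.univ.sup fun j => mpProdNeg A n i j

/-- Bilateral iteration `θ^n` (n ∈ ℤ) of a map `θ` with inverse `θi`. -/
def zIter {Ω : Type*} (θ θi : Ω → Ω) (n : ℤ) (ω : Ω) : Ω :=
  if 0 ≤ n then θ^[n.toNat] ω else θi^[(-n).toNat] ω

/-- The submatrix supported on a subset `S` of indices, filled with -∞ elsewhere. -/
def mpRestrict {d : ℕ} (S : Finset (Fin d)) (A : Matrix (Fin d) (Fin d) MP) :
    Matrix (Fin d) (Fin d) MP :=
  fun i j => if i ∈ S ∧ j ∈ S then A i j else ⊥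

/-- `B(1) B(2) ⋯ B(n)` where `B(k)` is the block of `A(k)` indexed by `I`. -/
def prodB {d : ℕ} (A : ℕ → Matrix (Fin d) (Fin d) MP) (I : Finset (Fin d)) :
    ℕ → Matrix (Fin d) (Fin d) MP
  | 0 => mpId d
  | n + 1 => mpMul (prodB A I n) (mpRestrict I (A (n + 1)))


section AuxProof

lemma mpMul_ne_bot {d : ℕ} (A B : Matrix (Fin d) (Fin d) MP) (i j : Fin d) :
    mpMul A B i j ≠ ⊥ ↔ ∃ k, A i k ≠ ⊥ ∧ B k j ≠ ⊥ := by
  unfold mpMul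
  rw [Ne, Finset.sup_eq_bot_iff]
  push_neg
  simp [WithBot.add_eq_bot, not_or]

lemma mpRestrict_ne_bot {d : ℕ} (I : Finset (Fin d)) (A : Matrix (Fin d) (Fin d) MP)
    (u v : Fin d) : mpRestrict I A u v ≠ ⊥ ↔ u ∈ I ∧ v ∈ I ∧ A u v ≠ ⊥ := by
  unfold mpRestrict
  by_cases h : u ∈ I ∧ v ∈ I <;> simp [h] <;> tauto

lemma prodB_succ_ne_bot {d : ℕ} (A : ℕ → Matrix (Fin d) (Fin d) MP) (I : Finset (Fin d))
    (n : ℕ) (i j : Fin d) :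
    prodB A I (n + 1) i j ≠ ⊥ ↔
      ∃ k, prodB A I n i k ≠ ⊥ ∧ k ∈ I ∧ j ∈ I ∧ A (n + 1) k j ≠ ⊥ := by
  show mpMul _ _ i j ≠ ⊥ ↔ _
  rw [mpMul_ne_bot]
  simp only [mpRestrict_ne_bot]

lemma prodB_zero_ne_bot {d : ℕ} (A : ℕ → Matrix (Fin d) (Fin d) MP) (I : Finset (Fin d))
    (i j : Fin d) : prodB A I 0 i j ≠ ⊥ ↔ i = j := by
  show mpId d i j ≠ ⊥ ↔ _
  unfold mpId
  by_cases h : i = j <;> simp [h]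

lemma measurableSet_ne_bot : MeasurableSet {x : MP | x ≠ ⊥} := by
  refine ⟨{(⊥ : EReal)}ᶜ, (measurableSet_singleton _).compl, ?_⟩
  have htoE : ∀ x : MP, toE x = ⊥ ↔ x = ⊥ := by
    intro x
    cases x with
    | none => exact iff_of_true rfl rfl
    | some r =>
        refine iff_of_false ?_ (by simp)
        show (r : EReal) ≠ ⊥
        simp
  ext x
  simp [htoE x]

lemma measurableSet_entry_ne_bot {d : ℕ} (u v : Fin d) :
    MeasurableSet {M : Matrix (Fin d) (Fin d) MP | M u v ≠ ⊥} := by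
  have h : Measurable (fun M : Matrix (Fin d) (Fin d) MP => M u v) :=
    (measurable_pi_apply v).comp (measurable_pi_apply u)
  exact h measurableSet_ne_bot

open ProbabilityTheory

section Meas
variable {Ω : Type*} {m : MeasurableSpace Ω}

/-- Any event defined as a predicate of a finite pattern of measurable events is measurable. -/
lemma pattern_meas {ι : Type*} [Fintype ι] {P : ι → Set Ω}
    (hP : ∀ u, MeasurableSet[m] (P u)) (Q : (ι → Prop) → Prop) :
    MeasurableSet[m] {ω | Q (fun u => ω ∈ P u)} := by
  classical
  have hset : {ω | Q (fun u => ω ∈ P u)} =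
      ⋃ (b : ι → Bool) (_ : Q (fun u => b u = true)),
        ⋂ u, (if b u then P u else (P u)ᶜ) := by
    ext ω
    simp only [Set.mem_setOf_eq, Set.mem_iUnion, Set.mem_iInter]
    constructor
    · intro h
      refine ⟨fun u => decide (ω ∈ P u), ?_, ?_⟩
      · have heq : (fun u => decide (ω ∈ P u) = true) = (fun u => ω ∈ P u) := by
          funext u; exact propext (by simp)
        rw [heq]; exact h
      · intro u
        by_cases hu : ω ∈ P u <;> simp [hu]
    · rintro ⟨b, hQ, hmem⟩
      have heq : (fun u => ω ∈ P u) = (fun u => b u = true) := by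
        funext u
        have h2 := hmem u
        by_cases hbu : b u = true
        · simp only [hbu, if_true] at h2
          exact propext (iff_of_true h2 hbu)
        · simp only [hbu, if_false] at h2
          exact propext (iff_of_false h2 (by simp [hbu]))
      rw [heq]; exact hQ
  rw [hset]
  refine MeasurableSet.iUnion fun b => MeasurableSet.iUnion fun _ => MeasurableSet.iInter fun u => ?_
  split
  · exact hP u
  · exact (hP u).compl

end Meas

section Events
variable {d : ℕ} {Ω : Type*} [mΩ : MeasurableSpace Ω]
  (A : ℕ → Ω → Matrix (Fin d) (Fin d) MP)

/-- σ-algebra generated by the matrices at times in `S`. -/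
def Falg (S : Set ℕ) : MeasurableSpace Ω := ⨆ k ∈ S, MeasurableSpace.comap (A k) inferInstance

lemma Falg_mono {S T : Set ℕ} (h : S ⊆ T) : Falg A S ≤ Falg A T :=
  biSup_mono h

lemma Falg_le (hmeas : ∀ n, Measurable (A n)) (S : Set ℕ) : Falg A S ≤ mΩ := by
  refine iSup_le fun k => iSup_le fun _ => ?_
  exact (hmeas k).comap_le

/-- the edge event at time t -/
def edgeEv (t : ℕ) (u v : Fin d) : Set Ω := {ω | A t ω u v ≠ ⊥}

lemma edgeEv_mem {S : Set ℕ} {t : ℕ} (ht : t ∈ S) (u v : Fin d) :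
    MeasurableSet[Falg A S] (edgeEv A t u v) := by
  have h1 : MeasurableSet[MeasurableSpace.comap (A t) inferInstance] (edgeEv A t u v) :=
    ⟨{M | M u v ≠ ⊥}, measurableSet_entry_ne_bot u v, rfl⟩
  exact le_biSup (fun k => MeasurableSpace.comap (A k) inferInstance) ht _ h1

lemma prodB_entry_mem (I : Finset (Fin d)) (n : ℕ) (i u : Fin d) :
    MeasurableSet[Falg A {k | 1 ≤ k ∧ k ≤ n}] {ω | prodB (fun k => A k ω) I n i u ≠ ⊥} := by
  induction n generalizing u with
  | zero =>
      by_cases h : mpId d i u = (⊥ : MP)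
      · have hs : {ω : Ω | prodB (fun k => A k ω) I 0 i u ≠ ⊥} = ∅ := by
          ext ω; simp [prodB, h]
        rw [hs]; exact @MeasurableSet.empty _ (Falg A _)
      · have hs : {ω : Ω | prodB (fun k => A k ω) I 0 i u ≠ ⊥} = Set.univ := by
          ext ω; simp [prodB, h]
        rw [hs]; exact @MeasurableSet.univ _ (Falg A _)
  | succ n ih =>
      have hs : {ω : Ω | prodB (fun k => A k ω) I (n + 1) i u ≠ ⊥} =
          ⋃ k : Fin d, ({ω : Ω | prodB (fun k' => A k' ω) I n i k ≠ ⊥} ∩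
            (if k ∈ I ∧ u ∈ I then edgeEv A (n + 1) k u else ∅)) := by
        ext ω
        simp only [Set.mem_setOf_eq, Set.mem_iUnion, Set.mem_inter_iff,
          prodB_succ_ne_bot]
        constructor
        · rintro ⟨k, h1, h2, h3, h4⟩
          exact ⟨k, h1, by simp [h2, h3, edgeEv, h4]⟩
        · rintro ⟨k, h1, h2⟩
          by_cases hk : k ∈ I ∧ u ∈ I
          · simp only [hk, if_true] at h2
            exact ⟨k, h1, hk.1, hk.2, h2⟩
          · simp [hk] at h2
      rw [hs]
      refine MeasurableSet.iUnion fun k => MeasurableSet.inter ?_ ?_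
      · refine Falg_mono A (fun t ht => ?_) _ (ih k)
        simp only [Set.mem_setOf_eq] at ht ⊢
        omega
      · split
        · exact edgeEv_mem A (show (n+1) ∈ {k | 1 ≤ k ∧ k ≤ n+1} from ⟨by omega, le_refl _⟩) k u
        · exact @MeasurableSet.empty _ (Falg A _)

end Events

section Det
variable {d : ℕ}

lemma prodB_step {B : ℕ → Matrix (Fin d) (Fin d) MP} {I : Finset (Fin d)} {n : ℕ}
    {i u v : Fin d} (h1 : prodB B I n i u ≠ ⊥) (hu : u ∈ I) (hv : v ∈ I)
    (h2 : B (n + 1) u v ≠ ⊥) : prodB B I (n + 1) i v ≠ ⊥ :=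
  (prodB_succ_ne_bot B I n i v).2 ⟨u, h1, hu, hv, h2⟩

lemma survivor {B : ℕ → Matrix (Fin d) (Fin d) MP} {I : Finset (Fin d)} {i : Fin d}
    (hi : i ∈ I) (hnbl : ∀ n, noBotLine (B n))
    (hE : ∀ n, ∀ j ∉ I, mpMul (prodB B I n) (B (n + 1)) i j = ⊥) :
    ∀ n, ∃ u, u ∈ I ∧ prodB B I n i u ≠ ⊥ := by
  intro n
  induction n with
  | zero => exact ⟨i, hi, by rw [prodB_zero_ne_bot]⟩
  | succ n ih =>
      obtain ⟨u, hu, hpu⟩ := ih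
      obtain ⟨w, hw⟩ := hnbl (n + 1) u
      by_cases hwI : w ∈ I
      · exact ⟨w, hwI, prodB_step hpu hu hwI hw⟩
      · exact absurd (hE n w hwI) ((mpMul_ne_bot _ _ i w).2 ⟨u, hpu, hw⟩)

lemma path_of_rtg {α : Type*} {r : α → α → Prop} {a b : α} (h : Relation.ReflTransGen r a b) :
    ∃ (L : ℕ) (f : ℕ → α), f 0 = a ∧ f L = b ∧ ∀ t < L, r (f t) (f (t + 1)) := by
  induction h with
  | refl => exact ⟨0, fun _ => a, rfl, rfl, by omega⟩
  | @tail b' c hab' hbc ih =>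
      obtain ⟨L, f, h0, hL, hr⟩ := ih
      refine ⟨L + 1, fun t => if t ≤ L then f t else c, by simp [h0], by simp, ?_⟩
      intro t ht
      rcases Nat.lt_or_ge t L with h1 | h1
      · have e1 : t ≤ L := by omega
        have e2 : t + 1 ≤ L := by omega
        show r (if t ≤ L then f t else c) (if t + 1 ≤ L then f (t + 1) else c)
        rw [if_pos e1, if_pos e2]
        exact hr t h1
      · have e1 : t = L := by omega
        have e2 : ¬ (t + 1 ≤ L) := by omega
        have e3 : t ≤ L := by omega
        show r (if t ≤ L then f t else c) (if t + 1 ≤ L then f (t + 1) else c)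
        rw [if_pos e3, if_neg e2, e1, hL]
        exact hbc

end Det

lemma mem_filterC {α : Type*} {p : α → Prop} {s : Finset α} {a : α} :
    a ∈ @Finset.filter α p (Classical.decPred p) s ↔ a ∈ s ∧ p a := by
  classical
  rw [Finset.filter_congr_decidable]
  exact Finset.mem_filter

def philim {d : ℕ} (i : Fin d) (s : Finset (Fin d)) : Fin d :=
  if h : s.Nonempty then s.min' h else i

section Gsel
variable {d : ℕ} {Ω : Type*} [mΩ : MeasurableSpace Ω] (A : ℕ → Ω → Matrix (Fin d) (Fin d) MP)
  (I : Finset (Fin d)) (i : Fin d)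

/-- least surviving index at time N (default i) -/
def gsel (N : ℕ) (ω : Ω) : Fin d :=
  philim i (@Finset.filter _ (fun v => prodB (fun k => A k ω) I N i v ≠ ⊥)
    (Classical.decPred _) I)

lemma gsel_mem (hi : i ∈ I) (N : ℕ) (ω : Ω) : gsel A I i N ω ∈ I := by
  unfold gsel philim
  split
  · next h => exact (mem_filterC.1 (Finset.min'_mem _ h)).1
  · exact hi

lemma gsel_surv {u : Fin d} (hu : u ∈ I) (N : ℕ) (ω : Ω)
    (h : prodB (fun k => A k ω) I N i u ≠ ⊥) :
    prodB (fun k => A k ω) I N i (gsel A I i N ω) ≠ ⊥ := by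
  unfold gsel philim
  have hne : (@Finset.filter _ (fun v => prodB (fun k => A k ω) I N i v ≠ ⊥)
      (Classical.decPred _) I).Nonempty := ⟨u, mem_filterC.2 ⟨hu, h⟩⟩
  rw [dif_pos hne]
  exact (mem_filterC.1 (Finset.min'_mem _ hne)).2

lemma gsel_meas (N : ℕ) (u : Fin d) :
    MeasurableSet[Falg A {k | 1 ≤ k ∧ k ≤ N}] {ω | gsel A I i N ω = u} :=
  pattern_meas (fun v => prodB_entry_mem A I N i v)
    (fun pat => philim i (@Finset.filter _ (fun v => pat v) (Classical.decPred _) I) = u)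

end Gsel

open scoped ENNReal


/-- for an i.i.d. sequence of random max-plus matrices with no line of
`-∞`, block-triangular with respect to a partition `(I, J = Iᶜ)`, with the incidence
graph of the `I×I` block `B` strongly connected and the `I×J` block `D` not a.s.
identically `-∞`, the event `{∀ n, (B(1)⋯B(n)D(n+1)·0)_i = -∞}` is negligible for
every `i ∈ I`. -/
theorem stmt11 {d : ℕ} {Ω : Type*} [MeasurableSpace Ω] (μ : Measure Ω)
    [IsProbabilityMeasure μ]
    (A : ℕ → Ω → Matrix (Fin d) (Fin d) MP)
    (hmeas : ∀ n, Measurable (A n))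
    (hindep : ProbabilityTheory.iIndepFun A μ)
    (hid : ∀ n, ProbabilityTheory.IdentDistrib (A n) (A 1) μ μ)
    (hline : ∀ n, ∀ᵐ ω ∂μ, noBotLine (A n ω))
    (I : Finset (Fin d))
    (hblock : ∀ n, ∀ᵐ ω ∂μ, ∀ i ∉ I, ∀ j ∈ I, A n ω i j = ⊥)
    (hconn : ∀ a ∈ I, ∀ b ∈ I,
      Relation.ReflTransGen (fun u v => u ∈ I ∧ v ∈ I ∧ 0 < μ {ω | A 1 ω u v ≠ ⊥}) a b)
    (hD : 0 < μ {ω | ∃ a ∈ I, ∃ j ∉ I, A 1 ω a j ≠ ⊥}) :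
    ∀ i ∈ I,
      μ {ω | ∀ n : ℕ, ∀ j ∉ I,
        mpMul (prodB (fun k => A k ω) I n) (A (n + 1) ω) i j = ⊥} = 0 := by
  classical
  intro i hi
  -- choose a₀ ∈ I, j₀ ∉ I with positive escape probability
  obtain ⟨a₀, ha₀, j₀, hj₀, hp₀⟩ :
      ∃ a, a ∈ I ∧ ∃ j, j ∉ I ∧ 0 < μ {ω | A 1 ω a j ≠ ⊥} := by
    by_contra hcon
    push_neg at hcon
    have hnull : μ {ω | ∃ a ∈ I, ∃ j ∉ I, A 1 ω a j ≠ ⊥} = 0 := by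
      have hsub : {ω | ∃ a ∈ I, ∃ j ∉ I, A 1 ω a j ≠ ⊥} ⊆
          ⋃ (a : Fin d) (j : Fin d), {ω | a ∈ I ∧ j ∉ I ∧ A 1 ω a j ≠ ⊥} := by
        rintro ω ⟨a, ha, j, hj, h⟩
        exact Set.mem_iUnion.2 ⟨a, Set.mem_iUnion.2 ⟨j, ha, hj, h⟩⟩
      refine measure_mono_null hsub ?_
      refine measure_iUnion_null fun a => measure_iUnion_null fun j => ?_
      by_cases haI : a ∈ I
      · by_cases hjI : j ∉ I
        · have h0 := hcon a haI j hjI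
          have he : {ω | a ∈ I ∧ j ∉ I ∧ A 1 ω a j ≠ ⊥} = {ω | A 1 ω a j ≠ ⊥} := by
            ext ω; simp [haI, hjI]
          rw [he]
          exact le_antisymm h0 zero_le
        · have he : {ω | a ∈ I ∧ j ∉ I ∧ A 1 ω a j ≠ ⊥} = ∅ := by
            ext ω; simp; tauto
          rw [he]; exact measure_empty
      · have he : {ω | a ∈ I ∧ j ∉ I ∧ A 1 ω a j ≠ ⊥} = ∅ := by
          ext ω; simp; tauto
        rw [he]; exact measure_empty
    rw [hnull] at hD
    exact lt_irrefl 0 hD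
  set R : Fin d → Fin d → Prop :=
    fun u v => u ∈ I ∧ v ∈ I ∧ 0 < μ {ω | A 1 ω u v ≠ ⊥} with hR
  have hpath : ∀ u : Fin d, ∃ (L : ℕ) (f : ℕ → Fin d),
      u ∈ I → (f 0 = u ∧ f L = a₀ ∧ ∀ t < L, R (f t) (f (t + 1))) := by
    intro u
    by_cases hu : u ∈ I
    · obtain ⟨L, f, h1, h2, h3⟩ := path_of_rtg (hconn u hu a₀ ha₀)
      exact ⟨L, f, fun _ => ⟨h1, h2, h3⟩⟩
    · exact ⟨0, fun _ => a₀, fun h => absurd h hu⟩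
  choose L pf hpf using hpath
  set M : ℕ := (Finset.univ.sup L) + 1 with hMdef
  have hLM : ∀ u, L u + 1 ≤ M := fun u => by
    have := Finset.le_sup (f := L) (Finset.mem_univ u); omega
  -- events
  set vtx : Fin d → ℕ → Fin d := fun u t => if t < L u then pf u t else a₀ with hvtx
  set vtx' : Fin d → ℕ → Fin d := fun u t => if t < L u then pf u (t + 1) else j₀ with hvtx'
  set Tev : ℕ → Fin d → Set Ω := fun m u =>
    ⋂ t ∈ Finset.range (L u + 1), edgeEv A (m * M + 1 + t) (vtx u t) (vtx' u t) with hTev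
  set p : Fin d → Fin d → ℝ≥0∞ := fun u v => μ {ω | A 1 ω u v ≠ ⊥} with hp
  have hedge_meas_amb : ∀ t u v, MeasurableSet (edgeEv A t u v) := fun t u v =>
    (hmeas t) (measurableSet_entry_ne_bot u v)
  have hedge_p : ∀ t u v, μ (edgeEv A t u v) = p u v := by
    intro t u v
    have h1 := (hid t).measure_mem_eq (measurableSet_entry_ne_bot u v)
    exact h1
  set q : Fin d → ℝ≥0∞ :=
    fun u => ∏ t ∈ Finset.range (L u + 1), p (vtx u t) (vtx' u t) with hqdef
  have hTq : ∀ m u, μ (Tev m u) = q u := by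
    intro m u
    have hTS : Tev m u =
        ⋂ k ∈ (Finset.range (L u + 1)).image (fun t => m * M + 1 + t),
          edgeEv A k (vtx u (k - (m * M + 1))) (vtx' u (k - (m * M + 1))) := by
      ext ω
      simp only [hTev, Set.mem_iInter₂, Finset.mem_image, Finset.mem_range]
      constructor
      · rintro h k ⟨t, ht, rfl⟩
        have e : m * M + 1 + t - (m * M + 1) = t := by omega
        rw [e]
        exact h t ht
      · intro h t ht
        have h2 := h (m * M + 1 + t) ⟨t, ht, rfl⟩
        have e : m * M + 1 + t - (m * M + 1) = t := by omega
        rwa [e] at h2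
    have hmeas' : ∀ k ∈ (Finset.range (L u + 1)).image (fun t => m * M + 1 + t),
        MeasurableSet[MeasurableSpace.comap (A k) inferInstance]
          (edgeEv A k (vtx u (k - (m * M + 1))) (vtx' u (k - (m * M + 1)))) :=
      fun k _ => ⟨_, measurableSet_entry_ne_bot _ _, rfl⟩
    rw [hTS, hindep.iIndep.meas_biInter hmeas',
      Finset.prod_image (fun x _ y _ h => by omega)]
    simp only [hqdef]
    refine Finset.prod_congr rfl fun t ht => ?_
    have e : m * M + 1 + t - (m * M + 1) = t := by omega
    rw [e]
    exact hedge_p _ _ _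
  have hq_pos : ∀ u, u ∈ I → 0 < q u := by
    intro u hu
    simp only [hqdef]
    rw [CanonicallyOrderedAdd.prod_pos]
    intro t ht
    rcases Nat.lt_or_ge t (L u) with h1 | h1
    · have hr := (hpf u hu).2.2 t h1
      rw [hR] at hr
      simp only [hvtx, hvtx', if_pos h1, hp]
      exact hr.2.2
    · have e : ¬ (t < L u) := by omega
      simp only [hvtx, hvtx', if_neg e, hp]
      exact hp₀
  set ρ : ℝ≥0∞ := I.sup (fun u => 1 - q u) with hρdef
  have hTmeas_amb : ∀ m u, MeasurableSet (Tev m u) := by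
    intro m u
    rw [hTev]
    exact MeasurableSet.iInter fun t => MeasurableSet.iInter fun _ => hedge_meas_amb _ _ _
  have hρ_lt : ρ < 1 := by
    simp only [hρdef]
    rw [Finset.sup_lt_iff (by norm_num : (⊥ : ℝ≥0∞) < 1)]
    intro u hu
    exact ENNReal.sub_lt_self ENNReal.one_ne_top one_ne_zero (ne_of_gt (hq_pos u hu))
  have hTc_le : ∀ m u, u ∈ I → μ ((Tev m u)ᶜ) ≤ ρ := by
    intro m u hu
    rw [measure_compl (hTmeas_amb m u) (measure_ne_top μ _), measure_univ, hTq m u]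
    simp only [hρdef]
    exact Finset.le_sup (f := fun u => 1 - q u) hu
  -- the selection process and its events
  set g : ℕ → Ω → Fin d := fun m ω => gsel A I i (m * M) ω with hg
  set Spast : ℕ → Set ℕ := fun m => {k | 1 ≤ k ∧ k ≤ m * M} with hSpast
  have hgmeas : ∀ m u, MeasurableSet[Falg A (Spast m)] {ω | g m ω = u} :=
    fun m u => gsel_meas A I i (m * M) u
  have hTmem : ∀ m u,
      MeasurableSet[Falg A {k | m * M + 1 ≤ k ∧ k ≤ (m + 1) * M}] (Tev m u) := by
    intro m u
    simp only [hTev]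
    refine MeasurableSet.iInter fun t => MeasurableSet.iInter fun ht => ?_
    refine edgeEv_mem A ?_ _ _
    have h1 := Finset.mem_range.1 ht
    have h2 := hLM u
    have e : (m + 1) * M = m * M + M := by ring
    exact ⟨by omega, by omega⟩
  set Cset : ℕ → Set Ω := fun m => {ω | ∀ k, k < m → ω ∉ Tev k (g k ω)} with hCset
  have hCsucc : ∀ m, Cset (m + 1) =
      Cset m ∩ ⋃ u ∈ I, ({ω | g m ω = u} ∩ (Tev m u)ᶜ) := by
    intro m
    ext ω
    simp only [hCset, Set.mem_setOf_eq, Set.mem_inter_iff, Set.mem_iUnion,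
      Set.mem_compl_iff]
    constructor
    · intro h
      refine ⟨fun k hk => h k (by omega), g m ω, gsel_mem A I i hi (m * M) ω, rfl,
        h m (by omega)⟩
    · rintro ⟨h1, u, hu, hgu, hT⟩ k hk
      rcases Nat.lt_or_ge k m with h2 | h2
      · exact h1 k h2
      · have e : k = m := by omega
        subst e
        rw [hgu]
        exact hT
  have hspast_mono : ∀ m, Spast m ⊆ Spast (m + 1) := by
    intro m k hk
    simp only [hSpast, Set.mem_setOf_eq] at hk ⊢
    have e : (m + 1) * M = m * M + M := by ring
    exact ⟨hk.1, by omega⟩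
  have hblk_sub : ∀ m, {k | m * M + 1 ≤ k ∧ k ≤ (m + 1) * M} ⊆ Spast (m + 1) := by
    intro m k hk
    simp only [Set.mem_setOf_eq] at hk
    simp only [hSpast, Set.mem_setOf_eq]
    exact ⟨by omega, hk.2⟩
  have hCmeas : ∀ m, MeasurableSet[Falg A (Spast m)] (Cset m) := by
    intro m
    induction m with
    | zero =>
        have he : Cset 0 = Set.univ := by
          ext ω; simp [hCset]
        rw [he]
        exact MeasurableSet.univ
    | succ m ih =>
        rw [hCsucc m]
        refine MeasurableSet.inter (Falg_mono A (hspast_mono m) _ ih) ?_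
        refine MeasurableSet.iUnion fun u => MeasurableSet.iUnion fun hu =>
          MeasurableSet.inter ?_ ?_
        · exact Falg_mono A (hspast_mono m) _ (hgmeas m u)
        · exact MeasurableSet.compl (Falg_mono A (hblk_sub m) _ (hTmem m u))
  have hindep2 : ∀ m,
      ProbabilityTheory.Indep (Falg A (Spast m)) (Falg A {k | m * M + 1 ≤ k}) μ := by
    intro m
    refine ProbabilityTheory.indep_iSup_of_disjoint (fun k => (hmeas k).comap_le)
      hindep.iIndep ?_
    rw [Set.disjoint_left]
    intro k hk hk2
    simp only [hSpast, Set.mem_setOf_eq] at hk hk2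
    omega
  have hstep : ∀ m, μ (Cset (m + 1)) ≤ ρ * μ (Cset m) := by
    intro m
    have hmeasPart : ∀ u, MeasurableSet (Cset m ∩ {ω | g m ω = u}) := fun u =>
      Falg_le A hmeas (Spast m) _ ((hCmeas m).inter (hgmeas m u))
    have happ : ∀ u ∈ I, μ ((Cset m ∩ {ω | g m ω = u}) ∩ (Tev m u)ᶜ) =
        μ (Cset m ∩ {ω | g m ω = u}) * μ ((Tev m u)ᶜ) := by
      intro u hu
      have hIndep := hindep2 m
      rw [ProbabilityTheory.Indep_iff] at hIndep
      refine hIndep _ _ ((hCmeas m).inter (hgmeas m u)) ?_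
      refine MeasurableSet.compl ?_
      refine Falg_mono A ?_ _ (hTmem m u)
      intro k hk
      simp only [Set.mem_setOf_eq] at hk ⊢
      exact hk.1
    have hsum : ∑ u ∈ I, μ (Cset m ∩ {ω | g m ω = u}) = μ (Cset m) := by
      have hU : ⋃ u ∈ I, (Cset m ∩ {ω | g m ω = u}) = Cset m := by
        ext ω
        simp only [Set.mem_iUnion, Set.mem_inter_iff, Set.mem_setOf_eq]
        constructor
        · rintro ⟨u, _, h1, _⟩; exact h1
        · intro h; exact ⟨g m ω, gsel_mem A I i hi (m * M) ω, h, rfl⟩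
      have hdisj : (↑I : Set (Fin d)).PairwiseDisjoint
          (fun u => Cset m ∩ {ω | g m ω = u}) := by
        intro u _ v _ huv
        refine Set.disjoint_left.2 ?_
        rintro ω ⟨_, h1⟩ ⟨_, h2⟩
        simp only [Set.mem_setOf_eq] at h1 h2
        exact huv (h1 ▸ h2 ▸ rfl)
      calc ∑ u ∈ I, μ (Cset m ∩ {ω | g m ω = u})
          = μ (⋃ u ∈ I, (Cset m ∩ {ω | g m ω = u})) :=
            (measure_biUnion_finset hdisj (fun u _ => hmeasPart u)).symm
        _ = μ (Cset m) := by rw [hU]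
    calc μ (Cset (m + 1))
        = μ (⋃ u ∈ I, ((Cset m ∩ {ω | g m ω = u}) ∩ (Tev m u)ᶜ)) := by
          rw [hCsucc m, Set.inter_iUnion₂]
          congr 1
          refine Set.iUnion₂_congr fun u hu => ?_
          rw [Set.inter_assoc]
      _ ≤ ∑ u ∈ I, μ ((Cset m ∩ {ω | g m ω = u}) ∩ (Tev m u)ᶜ) :=
          measure_biUnion_finset_le _ _
      _ = ∑ u ∈ I, μ (Cset m ∩ {ω | g m ω = u}) * μ ((Tev m u)ᶜ) :=
          Finset.sum_congr rfl happ
      _ ≤ ∑ u ∈ I, μ (Cset m ∩ {ω | g m ω = u}) * ρ :=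
          Finset.sum_le_sum fun u hu => mul_le_mul_right (hTc_le m u hu) _
      _ = (∑ u ∈ I, μ (Cset m ∩ {ω | g m ω = u})) * ρ := (Finset.sum_mul _ _ _).symm
      _ = μ (Cset m) * ρ := by rw [hsum]
      _ = ρ * μ (Cset m) := mul_comm _ _
  have hCbound : ∀ m, μ (Cset m) ≤ ρ ^ m := by
    intro m
    induction m with
    | zero =>
        have h1 : μ (Cset 0) ≤ μ Set.univ := measure_mono (Set.subset_univ _)
        simpa using h1
    | succ m ih =>
        calc μ (Cset (m + 1)) ≤ ρ * μ (Cset m) := hstep m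
        _ ≤ ρ * ρ ^ m := mul_le_mul_right ih ρ
        _ = ρ ^ (m + 1) := by rw [pow_succ, mul_comm]
  -- the escape argument
  have hEsub : ∀ m, {ω | ∀ n : ℕ, ∀ j ∉ I,
      mpMul (prodB (fun k => A k ω) I n) (A (n + 1) ω) i j = ⊥} ∩
      {ω | ∀ n, noBotLine (A n ω)} ⊆ Cset m := by
    intro m ω hω
    obtain ⟨hE, hnbl⟩ := hω
    simp only [Set.mem_setOf_eq] at hE hnbl
    simp only [hCset, Set.mem_setOf_eq]
    intro k hk hT
    obtain ⟨u₀, hu₀, hsurv⟩ := survivor hi hnbl (fun n j hj => hE n j hj) (k * M)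
    have hgI : g k ω ∈ I := gsel_mem A I i hi (k * M) ω
    have hgp : prodB (fun k' => A k' ω) I (k * M) i (g k ω) ≠ ⊥ :=
      gsel_surv A I i hu₀ (k * M) ω hsurv
    simp only [hTev, Set.mem_iInter₂] at hT
    have hclimb : ∀ t, t ≤ L (g k ω) →
        prodB (fun k' => A k' ω) I (k * M + t) i (pf (g k ω) t) ≠ ⊥ := by
      intro t
      induction t with
      | zero =>
          intro _
          rw [(hpf (g k ω) hgI).1]
          simpa using hgp
      | succ t ih =>
          intro hts
          have h1 := ih (by omega)
          have hedge := hT t (Finset.mem_range.2 (by omega))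
          have hlt : t < L (g k ω) := by omega
          simp only [hvtx, hvtx', if_pos hlt, edgeEv, Set.mem_setOf_eq] at hedge
          have hrel := (hpf (g k ω) hgI).2.2 t hlt
          rw [hR] at hrel
          have e : k * M + 1 + t = k * M + t + 1 := by omega
          rw [e] at hedge
          exact prodB_step h1 hrel.1 hrel.2.1 hedge
    have hfin := hclimb (L (g k ω)) le_rfl
    rw [(hpf (g k ω) hgI).2.1] at hfin
    have hlast := hT (L (g k ω)) (Finset.mem_range.2 (by omega))
    have hnlt : ¬ (L (g k ω) < L (g k ω)) := lt_irrefl _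
    simp only [hvtx, hvtx', if_neg hnlt, edgeEv, Set.mem_setOf_eq] at hlast
    have e2 : k * M + 1 + L (g k ω) = k * M + L (g k ω) + 1 := by omega
    rw [e2] at hlast
    have hesc : mpMul (prodB (fun k' => A k' ω) I (k * M + L (g k ω)))
        (A (k * M + L (g k ω) + 1) ω) i j₀ ≠ ⊥ :=
      (mpMul_ne_bot _ _ i j₀).2 ⟨a₀, hfin, hlast⟩
    exact hesc (hE (k * M + L (g k ω)) j₀ hj₀)
  -- conclusion
  have hΩ₀ : μ {ω | ∀ n, noBotLine (A n ω)}ᶜ = 0 := by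
    have h1 : ∀ᵐ ω ∂μ, ∀ n, noBotLine (A n ω) := MeasureTheory.ae_all_iff.2 hline
    exact h1
  have hbound : ∀ m, μ {ω | ∀ n : ℕ, ∀ j ∉ I,
      mpMul (prodB (fun k => A k ω) I n) (A (n + 1) ω) i j = ⊥} ≤ ρ ^ m := by
    intro m
    have h1 : {ω | ∀ n : ℕ, ∀ j ∉ I,
        mpMul (prodB (fun k => A k ω) I n) (A (n + 1) ω) i j = ⊥} ⊆
        Cset m ∪ {ω | ∀ n, noBotLine (A n ω)}ᶜ := by
      intro ω hω
      by_cases h : ∀ n, noBotLine (A n ω)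
      · exact Or.inl (hEsub m ⟨hω, h⟩)
      · exact Or.inr h
    calc μ _ ≤ μ (Cset m) + μ ({ω | ∀ n, noBotLine (A n ω)}ᶜ) :=
          (measure_mono h1).trans (measure_union_le _ _)
      _ = μ (Cset m) := by rw [hΩ₀, add_zero]
      _ ≤ ρ ^ m := hCbound m
  have h0 : μ {ω | ∀ n : ℕ, ∀ j ∉ I,
      mpMul (prodB (fun k => A k ω) I n) (A (n + 1) ω) i j = ⊥} ≤ 0 :=
    ge_of_tendsto' (ENNReal.tendsto_pow_atTop_nhds_zero_of_lt_one hρ_lt) hbound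
  exact le_antisymm h0 zero_le

end AuxProof
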